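/- Let ν be a probability measure on [0,∞) with ν({0}) = 0 and mean 1/α for some α > 0, and let ξ be a finite nonnegative measure on [0,∞) with ξ({0}) = 0 and first moment w = ⟨χ,ξ⟩ ∈ (0,∞). Define the fluid model paths σ(t) and μ(t) as in the gated processor sharing fluid model. Then for all t ≥ 0, ⟨χ, σ(t)⟩ + ⟨χ, μ(t)⟩ = w; i.e., the total fluid workload is constant. -/

import Mathlib

open MeasureTheory

/-- `F_ζ(x) = ∫ min(y,x) dζ(y)`. -/
noncomputable def Fz (ζ : Measure ℝ) (x : ℝ) : ℝ := ∫ y, min y x ∂ζ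

/-- The supremum `x*` of the support of `ζ`. -/
noncomputable def xstar (ζ : Measure ℝ) : ℝ := sInf {x : ℝ | ζ (Set.Ioi x) = 0}

/-- The generalized inverse `F⁻¹_ζ`. -/
noncomputable def Finv (ζ : Measure ℝ) (t : ℝ) : ℝ :=
  if t < ∫ y, y ∂ζ then sInf {x : ℝ | 0 ≤ x ∧ t ≤ Fz ζ x} else xstar ζ

/-- `ζ(· +₀ x)`: shift `ζ` left by `x` and remove all mass at or below zero. -/
noncomputable def shiftz (ζ : Measure ℝ) (x : ℝ) : Measure ℝ :=
  (ζ.restrict (Set.Ioi x)).map (fun y => y - x)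

/-- `⟦t⟧_w = t - ⌊t/w⌋ w`, the residue of `t` modulo `w`. -/
noncomputable def res (w t : ℝ) : ℝ := t - (⌊t / w⌋ : ℝ) * w

/-- The shifting path `σ(t)` of the gated processor sharing fluid model. -/
noncomputable def sigmaf (α w : ℝ) (ν ξ : Measure ℝ) (t : ℝ) : Measure ℝ :=
  if t < w then shiftz ξ (Finv ξ t)
  else shiftz (ENNReal.ofReal (α * w) • ν) (Finv (ENNReal.ofReal (α * w) • ν) (res w t))

/-- The growing path `μ(t) = α ⟦t⟧_w ν` of the gated processor sharing fluid model. -/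
noncomputable def muf (α w : ℝ) (ν : Measure ℝ) (t : ℝ) : Measure ℝ :=
  ENNReal.ofReal (α * res w t) • ν

lemma min_lip (y a b : ℝ) : |min y a - min y b| ≤ |a - b| := by
  rcases min_cases y a with ⟨h1, h1'⟩ | ⟨h1, h1'⟩ <;>
  rcases min_cases y b with ⟨h2, h2'⟩ | ⟨h2, h2'⟩ <;>
  rw [h1, h2, abs_le] <;>
  rcases abs_cases (a - b) with ⟨h3, h3'⟩ | ⟨h3, h3'⟩ <;>
  constructor <;> linarith

lemma integrable_min (ζ : Measure ℝ) [IsFiniteMeasure ζ] (hint : Integrable id ζ) (x : ℝ) :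
    Integrable (fun y => min y x) ζ :=
  hint.inf (integrable_const x)

lemma Fz_continuous (ζ : Measure ℝ) [IsFiniteMeasure ζ] (hint : Integrable id ζ) :
    Continuous (Fz ζ) := by
  apply LipschitzWith.continuous (K := (ζ Set.univ).toNNReal)
  apply LipschitzWith.of_dist_le_mul
  intro a b
  have h1 : Fz ζ a - Fz ζ b = ∫ y, (min y a - min y b) ∂ζ := by
    unfold Fz
    rw [integral_sub (integrable_min ζ hint a) (integrable_min ζ hint b)]
  rw [Real.dist_eq, Real.dist_eq, h1]
  have hK : ((ζ Set.univ).toNNReal : ℝ) = (ζ Set.univ).toReal := rfl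
  calc |∫ y, (min y a - min y b) ∂ζ| ≤ ∫ y, |min y a - min y b| ∂ζ := by
        rw [← Real.norm_eq_abs]
        refine (norm_integral_le_integral_norm _).trans_eq ?_
        simp [Real.norm_eq_abs]
    _ ≤ ∫ _y, |a - b| ∂ζ := by
        apply integral_mono _ (integrable_const _) (fun y => min_lip y a b)
        exact ((integrable_min ζ hint a).sub (integrable_min ζ hint b)).abs
    _ = (ζ Set.univ).toReal * |a - b| := by simp [mul_comm, measureReal_def]
    _ = ((ζ Set.univ).toNNReal : ℝ) * |a - b| := by rw [hK]

lemma Fz_zero (ζ : Measure ℝ) (hsupp : ζ (Set.Iio 0) = 0) : Fz ζ 0 = 0 := by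
  unfold Fz
  have hae : ∀ᵐ y ∂ζ, 0 ≤ y := by
    rw [ae_iff]
    convert hsupp using 2
    ext y
    simp [not_le]
  have hcong : (fun y => min y 0) =ᵐ[ζ] 0 := by
    filter_upwards [hae] with y hy
    simp [min_eq_right hy]
  rw [integral_congr_ae hcong]; simp

lemma Fz_tendsto (ζ : Measure ℝ) [IsFiniteMeasure ζ] (hint : Integrable id ζ) :
    Filter.Tendsto (Fz ζ) Filter.atTop (nhds (∫ y, y ∂ζ)) := by
  apply tendsto_integral_filter_of_dominated_convergence (bound := fun y => |y|)
  · exact Filter.Eventually.of_forall fun x =>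
      (integrable_min ζ hint x).aestronglyMeasurable
  · filter_upwards [Filter.eventually_ge_atTop (0 : ℝ)] with x hx
    apply Filter.Eventually.of_forall
    intro y
    rw [Real.norm_eq_abs, abs_le]
    constructor
    · rcases le_total y x with h | h
      · simp [min_eq_left h, neg_abs_le]
      · calc -|y| ≤ 0 := neg_nonpos.mpr (abs_nonneg y)
          _ ≤ x := hx
          _ = min y x := (min_eq_right h).symm
    · exact le_trans (min_le_left y x) (le_abs_self y)
  · exact hint.abs
  · apply Filter.Eventually.of_forall
    intro y
    apply Filter.Tendsto.congr' _ tendsto_const_nhds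
    filter_upwards [Filter.eventually_ge_atTop y] with x hx
    exact (min_eq_left hx).symm

lemma Finv_spec (ζ : Measure ℝ) [IsFiniteMeasure ζ] (hsupp : ζ (Set.Iio 0) = 0)
    (hint : Integrable id ζ) {s : ℝ} (hs0 : 0 ≤ s) (hsM : s < ∫ y, y ∂ζ) :
    0 ≤ Finv ζ s ∧ Fz ζ (Finv ζ s) = s := by
  have hcont := Fz_continuous ζ hint
  set S : Set ℝ := {x : ℝ | 0 ≤ x ∧ s ≤ Fz ζ x} with hS
  have hSclosed : IsClosed S := by
    have : S = Set.Ici 0 ∩ (Fz ζ) ⁻¹' Set.Ici s := by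
      ext x
      simp only [hS, Set.mem_setOf_eq, Set.mem_inter_iff, Set.mem_Ici, Set.mem_preimage]
    rw [this]
    exact isClosed_Ici.inter (isClosed_Ici.preimage hcont)
  have hSne : S.Nonempty := by
    obtain ⟨x, hx1, hx2⟩ :=
      (((Fz_tendsto ζ hint).eventually (eventually_gt_nhds hsM)).and
        (Filter.eventually_ge_atTop 0)).exists
    exact ⟨x, hx2, le_of_lt hx1⟩
  have hbdd : BddBelow S := ⟨0, fun x hx => hx.1⟩
  have hmem : sInf S ∈ S := IsClosed.csInf_mem hSclosed hSne hbdd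
  have hfin : Finv ζ s = sInf S := by
    unfold Finv; rw [if_pos hsM]
  refine ⟨by rw [hfin]; exact hmem.1, ?_⟩
  rw [hfin]
  refine le_antisymm ?_ hmem.2
  by_contra hgt
  push_neg at hgt
  rcases eq_or_lt_of_le hmem.1 with h0 | h0
  · have : Fz ζ (sInf S) = 0 := by rw [← h0]; exact Fz_zero ζ hsupp
    linarith
  · have hU : (Fz ζ) ⁻¹' (Set.Ioi s) ∩ Set.Ioi 0 ∈ nhds (sInf S) := by
      apply Filter.inter_mem
      · exact hcont.continuousAt.preimage_mem_nhds (Ioi_mem_nhds hgt)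
      · exact Ioi_mem_nhds h0
    obtain ⟨ε, hε, hball⟩ := Metric.mem_nhds_iff.mp hU
    have hx : (sInf S - ε / 2) ∈ Metric.ball (sInf S) ε := by
      rw [Metric.mem_ball, Real.dist_eq, abs_of_nonpos (by linarith)]
      linarith
    have hxS : (sInf S - ε / 2) ∈ S := by
      have h' := hball hx
      exact ⟨le_of_lt h'.2, le_of_lt h'.1⟩
    have := csInf_le hbdd hxS
    linarith

lemma moment_shift (ζ : Measure ℝ) [IsFiniteMeasure ζ] (hint : Integrable id ζ) (x : ℝ) :
    ∫ y, y ∂(shiftz ζ x) = (∫ y, y ∂ζ) - Fz ζ x := by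
  have hint' : Integrable (fun y : ℝ => y) ζ := hint
  have h0 : ∫ y, y ∂(shiftz ζ x) = ∫ y in Set.Ioi x, (y - x) ∂ζ := by
    rw [shiftz]
    exact integral_map (measurable_id.sub_const x).aemeasurable aestronglyMeasurable_id
  have hg : Integrable (fun y => y - min y x) ζ := hint'.sub (integrable_min ζ hint x)
  have h1 : ∫ y in Set.Ioi x, (y - min y x) ∂ζ = ∫ y in Set.Ioi x, (y - x) ∂ζ := by
    apply setIntegral_congr_fun measurableSet_Ioi
    intro y hy
    dsimp only
    rw [min_eq_right (le_of_lt hy)]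
  have h2 : ∫ y in (Set.Ioi x)ᶜ, (y - min y x) ∂ζ = 0 := by
    rw [show (0 : ℝ) = ∫ _y in (Set.Ioi x)ᶜ, (0 : ℝ) ∂ζ by simp]
    apply setIntegral_congr_fun measurableSet_Ioi.compl
    intro y hy
    simp only [Set.mem_compl_iff, Set.mem_Ioi, not_lt] at hy
    dsimp only
    rw [min_eq_left hy, sub_self]
  have h3 : ∫ y, (y - min y x) ∂ζ = (∫ y, y ∂ζ) - Fz ζ x :=
    integral_sub hint' (integrable_min ζ hint x)
  rw [h0, ← h1, ← h3, ← integral_add_compl measurableSet_Ioi hg, h2, add_zero]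

lemma res_mem (w : ℝ) (hw : 0 < w) (t : ℝ) : 0 ≤ res w t ∧ res w t < w :=
  ⟨Int.sub_floor_div_mul_nonneg t hw, Int.sub_floor_div_mul_lt t hw⟩

lemma res_of_lt {w t : ℝ} (hw : 0 < w) (ht : 0 ≤ t) (htw : t < w) : res w t = t := by
  unfold res
  have h : ⌊t / w⌋ = 0 := by
    rw [Int.floor_eq_zero_iff]
    constructor
    · positivity
    · rw [div_lt_one hw]; exact htw
  rw [h]; push_cast; ring

theorem stmt10 (α : ℝ) (hα : 0 < α) (ν : Measure ℝ) [IsProbabilityMeasure ν]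
    (hν0 : ν {0} = 0) (hνsupp : ν (Set.Iio 0) = 0) (hνint : Integrable id ν)
    (hνmean : ∫ y, y ∂ν = 1 / α)
    (ξ : Measure ℝ) [IsFiniteMeasure ξ]
    (hξ0 : ξ {0} = 0) (hξsupp : ξ (Set.Iio 0) = 0) (hξint : Integrable id ξ)
    (w : ℝ) (hw : w = ∫ y, y ∂ξ) (hwpos : 0 < w)
    (t : ℝ) (ht : 0 ≤ t) :
    (∫ y, y ∂(sigmaf α w ν ξ t)) + (∫ y, y ∂(muf α w ν t)) = w := by
  have hmu : ∀ s : ℝ, 0 ≤ s → ∫ y, y ∂((ENNReal.ofReal (α * s) • ν : Measure ℝ)) = s := by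
    intro s hs
    rw [integral_smul_measure, hνmean, ENNReal.toReal_ofReal (by positivity)]
    simp only [smul_eq_mul]
    field_simp
  by_cases htw : t < w
  · have hres : res w t = t := res_of_lt hwpos ht htw
    have hμ : ∫ y, y ∂(muf α w ν t) = t := by
      rw [muf, hres]; exact hmu t ht
    have hσ : ∫ y, y ∂(sigmaf α w ν ξ t) = w - t := by
      rw [sigmaf, if_pos htw, moment_shift ξ hξint]
      have h := Finv_spec ξ hξsupp hξint ht (by rw [← hw]; exact htw)
      rw [h.2, ← hw]
    rw [hσ, hμ]; ring
  · set c : ENNReal := ENNReal.ofReal (α * w) with hc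
    have hcne : c ≠ ⊤ := ENNReal.ofReal_ne_top
    set η : Measure ℝ := c • ν with hη
    have : IsFiniteMeasure η := by
      constructor
      rw [hη, Measure.smul_apply, smul_eq_mul]
      exact ENNReal.mul_lt_top ENNReal.ofReal_lt_top (measure_lt_top ν _)
    have hηint : Integrable id η := hνint.smul_measure hcne
    have hηsupp : η (Set.Iio 0) = 0 := by
      rw [hη, Measure.smul_apply, smul_eq_mul, hνsupp, mul_zero]
    have hηmean : ∫ y, y ∂η = w := by
      rw [hη, integral_smul_measure, hνmean, hc,
        ENNReal.toReal_ofReal (by positivity)]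
      simp only [smul_eq_mul]
      field_simp
    obtain ⟨hr0, hrw⟩ := res_mem w hwpos t
    have hμ : ∫ y, y ∂(muf α w ν t) = res w t := by
      rw [muf]; exact hmu _ hr0
    have hσ : ∫ y, y ∂(sigmaf α w ν ξ t) = w - res w t := by
      rw [sigmaf, if_neg htw, ← hc, ← hη, moment_shift η hηint]
      have h := Finv_spec η hηsupp hηint hr0 (by rw [hηmean]; exact hrw)
      rw [h.2, hηmean]
    rw [hσ, hμ]; ring
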